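/- arXiv:1408.3528 — 2 statements merged into one kernel-verified Lean document; each statement's English description precedes it below -/
import Mathlib

section
/- Let A ∈ 𝒜 satisfy condition (♦) and suppose the first column of A satisfies ∑_{n=1}^∞ φ_n(|a_{n1}|/σ) < ∞ for some σ > 0. Then the class L_Φ^A is a quasi-Banach operator ideal: for all Banach spaces E, F, E_0, F_0: (i) for every continuous linear functional x' on E and every y ∈ F, the rank-one operator x'⊗y : x ↦ x'(x)y belongs to L_Φ^A(E,F); (ii) if S, T ∈ L_Φ^A(E,F) then S+T ∈ L_Φ^A(E,F); (iii) if T ∈ L(E_0,E), S ∈ L_Φ^A(E,F) and R ∈ L(F,F_0), then RST ∈ L_Φ^A(E_0,F_0) and ‖RST‖_Φ^A ≤ ‖R‖ ‖S‖_Φ^A ‖T‖; and each component L_Φ^A(E,F) is complete under the quasi-norm ‖·‖_Φ^A. -/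
open Filter Topology

/-- An Orlicz function: convex, nondecreasing, continuous on `[0,∞)`,
vanishing at `0`, positive on `(0,∞)`, tending to `∞` at `∞`. -/
structure IsOrliczFn (φ : ℝ → ℝ) : Prop where
  convexOn : ConvexOn ℝ (Set.Ici (0 : ℝ)) φ
  monotoneOn : MonotoneOn φ (Set.Ici (0 : ℝ))
  continuousOn : ContinuousOn φ (Set.Ici (0 : ℝ))
  map_zero : φ 0 = 0
  pos : ∀ t : ℝ, 0 < t → 0 < φ t
  tendsto_atTop : Filter.Tendsto φ Filter.atTop Filter.atTop

/-- A Musielak-Orlicz function: a sequence of Orlicz functions. -/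
def IsMusielakOrlicz (Φ : ℕ → ℝ → ℝ) : Prop := ∀ n, IsOrliczFn (Φ n)

/-- The class 𝒜 of infinite matrices: every column is nonzero. -/
def MatrixClassA (a : ℕ → ℕ → ℝ) : Prop := ∀ k, ∃ n, a n k ≠ 0

/-- Condition (♦) on the matrix `A` with constant `M` (`0`-indexed version of
`|a_{n,2k-1}| + |a_{n,2k}| ≤ M |a_{n,k}|`). -/
def CondDiamond (a : ℕ → ℕ → ℝ) (M : ℝ) : Prop :=
  ∀ n k : ℕ, |a n (2 * k)| + |a n (2 * k + 1)| ≤ M * |a n k|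

/-- An `s`-number sequence in the sense of Pietsch (indexed from `0`, so that
`s T 0` is the paper's `s₁(T)`). -/
structure SNumberSeq : Type 1 where
  s : ∀ (E F : Type) [NormedAddCommGroup E] [NormedSpace ℝ E] [CompleteSpace E]
      [NormedAddCommGroup F] [NormedSpace ℝ F] [CompleteSpace F],
      (E →L[ℝ] F) → ℕ → ℝ
  nonneg : ∀ (E F : Type) [NormedAddCommGroup E] [NormedSpace ℝ E] [CompleteSpace E]
      [NormedAddCommGroup F] [NormedSpace ℝ F] [CompleteSpace F]
      (T : E →L[ℝ] F) (n : ℕ), 0 ≤ s E F T n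
  norm_eq : ∀ (E F : Type) [NormedAddCommGroup E] [NormedSpace ℝ E] [CompleteSpace E]
      [NormedAddCommGroup F] [NormedSpace ℝ F] [CompleteSpace F]
      (T : E →L[ℝ] F), s E F T 0 = ‖T‖
  antitone : ∀ (E F : Type) [NormedAddCommGroup E] [NormedSpace ℝ E] [CompleteSpace E]
      [NormedAddCommGroup F] [NormedSpace ℝ F] [CompleteSpace F]
      (T : E →L[ℝ] F), Antitone (s E F T)
  additive : ∀ (E F : Type) [NormedAddCommGroup E] [NormedSpace ℝ E] [CompleteSpace E]
      [NormedAddCommGroup F] [NormedSpace ℝ F] [CompleteSpace F]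
      (S T : E →L[ℝ] F) (m n : ℕ), s E F (S + T) (m + n) ≤ s E F S m + s E F T n
  ideal : ∀ (E F E₀ F₀ : Type)
      [NormedAddCommGroup E] [NormedSpace ℝ E] [CompleteSpace E]
      [NormedAddCommGroup F] [NormedSpace ℝ F] [CompleteSpace F]
      [NormedAddCommGroup E₀] [NormedSpace ℝ E₀] [CompleteSpace E₀]
      [NormedAddCommGroup F₀] [NormedSpace ℝ F₀] [CompleteSpace F₀]
      (R : F →L[ℝ] F₀) (S : E →L[ℝ] F) (T : E₀ →L[ℝ] E) (n : ℕ),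
      s E₀ F₀ ((R.comp S).comp T) n ≤ ‖R‖ * s E F S n * ‖T‖
  rank : ∀ (E F : Type) [NormedAddCommGroup E] [NormedSpace ℝ E] [CompleteSpace E]
      [NormedAddCommGroup F] [NormedSpace ℝ F] [CompleteSpace F]
      (T : E →L[ℝ] F) (n : ℕ),
      Module.rank ℝ ↥(LinearMap.range (T : E →ₗ[ℝ] F)) ≤ (n : Cardinal) → s E F T n = 0
  norming : ∀ n : ℕ,
      s (EuclideanSpace ℝ (Fin (n + 1))) (EuclideanSpace ℝ (Fin (n + 1)))
        (ContinuousLinearMap.id ℝ (EuclideanSpace ℝ (Fin (n + 1)))) n = 1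

/-- Membership of a scalar sequence `t = (s_k(T))` in `l_Φ^A`:
row sums `∑_k |a_{nk}| t_k` are finite and `∑_n φ_n(row_n/σ) < ∞` for some `σ > 0`. -/
def OpMemL (Φ : ℕ → ℝ → ℝ) (a : ℕ → ℕ → ℝ) (t : ℕ → ℝ) : Prop :=
  (∀ n, Summable fun k => |a n k| * t k) ∧
    ∃ σ > (0 : ℝ), Summable fun n => Φ n ((∑' k, |a n k| * t k) / σ)

/-- Membership in `h_Φ^A`: as `OpMemL` but for every `σ > 0`. -/
def OpMemH (Φ : ℕ → ℝ → ℝ) (a : ℕ → ℕ → ℝ) (t : ℕ → ℝ) : Prop :=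
  (∀ n, Summable fun k => |a n k| * t k) ∧
    ∀ σ > (0 : ℝ), Summable fun n => Φ n ((∑' k, |a n k| * t k) / σ)

/-- The quasi-norm `‖T‖_Φ^A` evaluated on the sequence `t = (s_k(T))`. -/
noncomputable def OpANorm (Φ : ℕ → ℝ → ℝ) (a : ℕ → ℕ → ℝ) (t : ℕ → ℝ) : ℝ :=
  sInf {σ : ℝ | 0 < σ ∧ (Summable fun n => Φ n ((∑' k, |a n k| * t k) / σ)) ∧
    (∑' n, Φ n ((∑' k, |a n k| * t k) / σ)) ≤ 1}

section Helpers

variable {φ : ℝ → ℝ}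

lemma IsOrliczFn.nonneg' (h : IsOrliczFn φ) {t : ℝ} (ht : 0 ≤ t) : 0 ≤ φ t := by
  have := h.monotoneOn (Set.mem_Ici.mpr le_rfl) (Set.mem_Ici.mpr ht) ht
  rwa [h.map_zero] at this

lemma IsOrliczFn.mono' (h : IsOrliczFn φ) {x y : ℝ} (hx : 0 ≤ x) (hxy : x ≤ y) :
    φ x ≤ φ y :=
  h.monotoneOn (Set.mem_Ici.mpr hx) (Set.mem_Ici.mpr (hx.trans hxy)) hxy

lemma IsOrliczFn.smul_le' (h : IsOrliczFn φ) {θ x : ℝ} (h0 : 0 ≤ θ) (h1 : θ ≤ 1)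
    (hx : 0 ≤ x) : φ (θ * x) ≤ θ * φ x := by
  have := h.convexOn.2 (Set.mem_Ici.mpr hx) (Set.mem_Ici.mpr (le_refl (0:ℝ)))
    h0 (by linarith : (0:ℝ) ≤ 1 - θ) (by ring)
  simpa [h.map_zero, smul_eq_mul] using this

lemma IsOrliczFn.exists_one_lt (h : IsOrliczFn φ) : ∃ c : ℝ, 0 ≤ c ∧ 1 < φ c := by
  have := (h.tendsto_atTop.eventually_gt_atTop 1).and (Filter.eventually_ge_atTop (0:ℝ))
  obtain ⟨c, hc1, hc0⟩ := this.exists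
  exact ⟨c, hc0, hc1⟩

lemma IsOrliczFn.le_of_map_le_one (h : IsOrliczFn φ) {c x : ℝ} (hc0 : 0 ≤ c)
    (hc : 1 < φ c) (hx : 0 ≤ x) (hx1 : φ x ≤ 1) : x ≤ c := by
  by_contra hlt
  push_neg at hlt
  have := h.mono' hc0 hlt.le
  linarith

lemma IsOrliczFn.tendsto_comp (h : IsOrliczFn φ) {α : Type*} {l : Filter α}
    {g : α → ℝ} {x : ℝ} (hg : ∀ i, 0 ≤ g i) (hx : 0 ≤ x)
    (ht : Filter.Tendsto g l (𝓝 x)) :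
    Filter.Tendsto (fun i => φ (g i)) l (𝓝 (φ x)) := by
  have hcw : ContinuousWithinAt φ (Set.Ici 0) x := h.continuousOn x (Set.mem_Ici.mpr hx)
  have hcw' : Filter.Tendsto φ (𝓝[Set.Ici 0] x) (𝓝 (φ x)) := hcw
  have h2 : Filter.Tendsto g l (𝓝[Set.Ici 0] x) :=
    tendsto_nhdsWithin_iff.mpr ⟨ht, Filter.Eventually.of_forall hg⟩
  exact hcw'.comp h2

/-- The defining set of the quasi-norm. -/
def NSet (Φ : ℕ → ℝ → ℝ) (a : ℕ → ℕ → ℝ) (t : ℕ → ℝ) : Set ℝ :=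
  {σ : ℝ | 0 < σ ∧ (Summable fun n => Φ n ((∑' k, |a n k| * t k) / σ)) ∧
    (∑' n, Φ n ((∑' k, |a n k| * t k) / σ)) ≤ 1}

lemma opANorm_eq_sInf (Φ : ℕ → ℝ → ℝ) (a : ℕ → ℕ → ℝ) (t : ℕ → ℝ) :
    OpANorm Φ a t = sInf (NSet Φ a t) := rfl

lemma nset_bddBelow (Φ : ℕ → ℝ → ℝ) (a : ℕ → ℕ → ℝ) (t : ℕ → ℝ) :
    BddBelow (NSet Φ a t) := ⟨0, fun _ hx => hx.1.le⟩

lemma opANorm_nonneg (Φ : ℕ → ℝ → ℝ) (a : ℕ → ℕ → ℝ) (t : ℕ → ℝ) :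
    0 ≤ OpANorm Φ a t :=
  Real.sInf_nonneg (fun _ hx => hx.1.le)

lemma opANorm_le_of_mem {Φ : ℕ → ℝ → ℝ} {a : ℕ → ℕ → ℝ} {t : ℕ → ℝ} {σ : ℝ}
    (h : σ ∈ NSet Φ a t) : OpANorm Φ a t ≤ σ :=
  csInf_le (nset_bddBelow Φ a t) h

lemma row_nonneg (a : ℕ → ℕ → ℝ) {t : ℕ → ℝ} (ht : ∀ k, 0 ≤ t k) (n : ℕ) :
    0 ≤ ∑' k, |a n k| * t k :=
  tsum_nonneg fun k => mul_nonneg (abs_nonneg _) (ht k)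

lemma nset_nonempty {Φ : ℕ → ℝ → ℝ} (hΦ : IsMusielakOrlicz Φ) {a : ℕ → ℕ → ℝ}
    {t : ℕ → ℝ} (ht0 : ∀ k, 0 ≤ t k) (h : OpMemL Φ a t) : (NSet Φ a t).Nonempty := by
  obtain ⟨hrows, σ, hσ, hsum⟩ := h
  set C : ℝ := max 1 (∑' n, Φ n ((∑' k, |a n k| * t k) / σ)) with hC
  have hC1 : (1:ℝ) ≤ C := le_max_left _ _
  have hC0 : (0:ℝ) < C := lt_of_lt_of_le one_pos hC1
  have hrn : ∀ n, 0 ≤ (∑' k, |a n k| * t k) := row_nonneg a ht0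
  have harg : ∀ n, (∑' k, |a n k| * t k) / (C * σ) =
      (1 / C) * ((∑' k, |a n k| * t k) / σ) := by
    intro n
    rw [div_mul_div_comm, one_mul]
  have hkey : ∀ n, Φ n ((∑' k, |a n k| * t k) / (C * σ)) ≤
      (1 / C) * Φ n ((∑' k, |a n k| * t k) / σ) := by
    intro n
    rw [harg n]
    exact (hΦ n).smul_le' (by positivity) (by rw [div_le_one hC0]; exact hC1)
      (div_nonneg (hrn n) hσ.le)
  have hnn : ∀ n, 0 ≤ Φ n ((∑' k, |a n k| * t k) / (C * σ)) := fun n =>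
    (hΦ n).nonneg' (div_nonneg (hrn n) (by positivity))
  have hsum2 : Summable fun n => Φ n ((∑' k, |a n k| * t k) / (C * σ)) :=
    Summable.of_nonneg_of_le hnn hkey (hsum.mul_left _)
  refine ⟨C * σ, by positivity, hsum2, ?_⟩
  have := Summable.tsum_le_tsum hkey hsum2 (hsum.mul_left _)
  rw [tsum_mul_left] at this
  refine this.trans ?_
  rw [one_div, inv_mul_le_iff₀ hC0, mul_one]
  exact le_max_right _ _

lemma memL_mono {Φ : ℕ → ℝ → ℝ} (hΦ : IsMusielakOrlicz Φ) {a : ℕ → ℕ → ℝ}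
    {t u : ℕ → ℝ} {c : ℝ} (hc : 0 ≤ c) (ht0 : ∀ k, 0 ≤ t k) (hu0 : ∀ k, 0 ≤ u k)
    (hle : ∀ k, t k ≤ c * u k) (hu : OpMemL Φ a u) : OpMemL Φ a t := by
  obtain ⟨hrows, σ, hσ, hsum⟩ := hu
  have hterm : ∀ n k, |a n k| * t k ≤ c * (|a n k| * u k) := by
    intro n k
    have := mul_le_mul_of_nonneg_left (hle k) (abs_nonneg (a n k))
    nlinarith [abs_nonneg (a n k)]
  have htn : ∀ n k, 0 ≤ |a n k| * t k := fun n k =>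
    mul_nonneg (abs_nonneg _) (ht0 k)
  have hrows' : ∀ n, Summable fun k => |a n k| * t k := fun n =>
    Summable.of_nonneg_of_le (htn n) (hterm n) ((hrows n).mul_left c)
  have hrowle : ∀ n, (∑' k, |a n k| * t k) ≤ c * (∑' k, |a n k| * u k) := by
    intro n
    have := Summable.tsum_le_tsum (hterm n) (hrows' n) ((hrows n).mul_left c)
    rwa [tsum_mul_left] at this
  refine ⟨hrows', (c + 1) * σ, by positivity, ?_⟩
  have hru : ∀ n, 0 ≤ (∑' k, |a n k| * u k) := row_nonneg a hu0
  have hrt : ∀ n, 0 ≤ (∑' k, |a n k| * t k) := row_nonneg a ht0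
  have hkey : ∀ n, Φ n ((∑' k, |a n k| * t k) / ((c + 1) * σ)) ≤
      Φ n ((∑' k, |a n k| * u k) / σ) := by
    intro n
    refine (hΦ n).mono' (div_nonneg (hrt n) (by positivity)) ?_
    rw [div_le_div_iff₀ (by positivity) hσ]
    have h1 : (∑' k, |a n k| * t k) ≤ (c + 1) * (∑' k, |a n k| * u k) := by
      nlinarith [hrowle n, hru n]
    nlinarith [mul_le_mul_of_nonneg_right h1 hσ.le]
  exact Summable.of_nonneg_of_le
    (fun n => (hΦ n).nonneg' (div_nonneg (hrt n) (by positivity))) hkey hsum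

lemma memL_add {Φ : ℕ → ℝ → ℝ} (hΦ : IsMusielakOrlicz Φ) {a : ℕ → ℕ → ℝ} {M : ℝ}
    (hM : 0 < M) (hD : CondDiamond a M) {t u v : ℕ → ℝ}
    (ht0 : ∀ k, 0 ≤ t k) (hu0 : ∀ k, 0 ≤ u k) (hv0 : ∀ k, 0 ≤ v k)
    (hva : Antitone v) (hadd : ∀ j k, t (j + k) ≤ u j + v k)
    (hu : OpMemL Φ a u) (hv : OpMemL Φ a v) : OpMemL Φ a t := by
  obtain ⟨hus, σu, hσu, hσus⟩ := hu
  obtain ⟨hvs, σv, hσv, hσvs⟩ := hv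
  have hrow : ∀ n, Summable (fun k => |a n k| * t k) ∧
      (∑' k, |a n k| * t k) ≤
        M * ((∑' k, |a n k| * u k) + (∑' k, |a n k| * v k)) := by
    intro n
    have hwsum : Summable (fun k => M * (|a n k| * u k + |a n k| * v k)) :=
      ((hus n).add (hvs n)).mul_left M
    have heb : ∀ k, |a n (2*k)| * t (2*k) + |a n (2*k+1)| * t (2*k+1) ≤
        M * (|a n k| * u k + |a n k| * v k) := by
      intro k
      have h1 : t (2*k) ≤ u k + v k := by rw [two_mul]; exact hadd k k
      have h2 : t (2*k+1) ≤ u k + v k := by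
        have e : 2*k+1 = k + (k+1) := by ring
        rw [e]
        have := hva (Nat.le_succ k)
        have := hadd k (k+1)
        linarith
      have hd := hD n k
      have hA := abs_nonneg (a n (2*k)); have hB := abs_nonneg (a n (2*k+1))
      have ht2 := ht0 (2*k); have ht3 := ht0 (2*k+1)
      have huv : 0 ≤ u k + v k := add_nonneg (hu0 k) (hv0 k)
      calc |a n (2*k)| * t (2*k) + |a n (2*k+1)| * t (2*k+1)
          ≤ |a n (2*k)| * (u k + v k) + |a n (2*k+1)| * (u k + v k) := by
            gcongr
        _ = (|a n (2*k)| + |a n (2*k+1)|) * (u k + v k) := by ring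
        _ ≤ (M * |a n k|) * (u k + v k) := mul_le_mul_of_nonneg_right hd huv
        _ = M * (|a n k| * u k + |a n k| * v k) := by ring
    have hen : ∀ k, 0 ≤ |a n (2*k)| * t (2*k) := fun k =>
      mul_nonneg (abs_nonneg _) (ht0 _)
    have hon : ∀ k, 0 ≤ |a n (2*k+1)| * t (2*k+1) := fun k =>
      mul_nonneg (abs_nonneg _) (ht0 _)
    have he : Summable (fun k => |a n (2*k)| * t (2*k)) :=
      Summable.of_nonneg_of_le hen
        (fun k => le_trans (le_add_of_nonneg_right (hon k)) (heb k)) hwsum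
    have ho : Summable (fun k => |a n (2*k+1)| * t (2*k+1)) :=
      Summable.of_nonneg_of_le hon
        (fun k => le_trans (le_add_of_nonneg_left (hen k)) (heb k)) hwsum
    have hsumt : Summable (fun k => |a n k| * t k) := Summable.even_add_odd (f := fun k => |a n k| * t k) he ho
    refine ⟨hsumt, ?_⟩
    have e1 : (∑' k, |a n (2*k)| * t (2*k)) + (∑' k, |a n (2*k+1)| * t (2*k+1)) =
        ∑' k, |a n k| * t k := tsum_even_add_odd (f := fun k => |a n k| * t k) he ho
    have e2 : (∑' k, |a n (2*k)| * t (2*k)) + (∑' k, |a n (2*k+1)| * t (2*k+1)) =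
        ∑' k, (|a n (2*k)| * t (2*k) + |a n (2*k+1)| * t (2*k+1)) :=
      (Summable.tsum_add he ho).symm
    have e3 : (∑' k, (|a n (2*k)| * t (2*k) + |a n (2*k+1)| * t (2*k+1))) ≤
        ∑' k, M * (|a n k| * u k + |a n k| * v k) :=
      Summable.tsum_le_tsum heb (he.add ho) hwsum
    have e4 : (∑' k, M * (|a n k| * u k + |a n k| * v k)) =
        M * ((∑' k, |a n k| * u k) + (∑' k, |a n k| * v k)) := by
      rw [tsum_mul_left, Summable.tsum_add (hus n) (hvs n)]
    rw [← e1, e2]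
    rw [e4] at e3
    exact e3
  refine ⟨fun n => (hrow n).1, M * (σu + σv), by positivity, ?_⟩
  have hrt : ∀ n, 0 ≤ (∑' k, |a n k| * t k) := row_nonneg a ht0
  have hru : ∀ n, 0 ≤ (∑' k, |a n k| * u k) := row_nonneg a hu0
  have hrv : ∀ n, 0 ≤ (∑' k, |a n k| * v k) := row_nonneg a hv0
  have hkey : ∀ n, Φ n ((∑' k, |a n k| * t k) / (M * (σu + σv))) ≤
      σu / (σu + σv) * Φ n ((∑' k, |a n k| * u k) / σu) +
      σv / (σu + σv) * Φ n ((∑' k, |a n k| * v k) / σv) := by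
    intro n
    have h1 : (∑' k, |a n k| * t k) / (M * (σu + σv)) ≤
        ((∑' k, |a n k| * u k) + (∑' k, |a n k| * v k)) / (σu + σv) := by
      rw [div_le_div_iff₀ (by positivity) (by positivity)]
      calc (∑' k, |a n k| * t k) * (σu + σv)
          ≤ (M * ((∑' k, |a n k| * u k) + (∑' k, |a n k| * v k))) * (σu + σv) :=
            mul_le_mul_of_nonneg_right (hrow n).2 (by positivity)
        _ = ((∑' k, |a n k| * u k) + (∑' k, |a n k| * v k)) * (M * (σu + σv)) := by
            ring
    have h2 := (hΦ n).mono' (div_nonneg (hrt n) (by positivity)) h1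
    have e5 : σu / (σu + σv) * ((∑' k, |a n k| * u k) / σu) =
        (∑' k, |a n k| * u k) / (σu + σv) := by
      rw [div_mul_div_comm, mul_comm σu, mul_div_mul_right _ _ hσu.ne']
    have e6 : σv / (σu + σv) * ((∑' k, |a n k| * v k) / σv) =
        (∑' k, |a n k| * v k) / (σu + σv) := by
      rw [div_mul_div_comm, mul_comm σv, mul_div_mul_right _ _ hσv.ne']
    have harg : σu / (σu + σv) * ((∑' k, |a n k| * u k) / σu) +
        σv / (σu + σv) * ((∑' k, |a n k| * v k) / σv) =
        ((∑' k, |a n k| * u k) + (∑' k, |a n k| * v k)) / (σu + σv) := by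
      rw [e5, e6, ← add_div]
    have h3 := (hΦ n).convexOn.2 (Set.mem_Ici.mpr (div_nonneg (hru n) hσu.le))
      (Set.mem_Ici.mpr (div_nonneg (hrv n) hσv.le))
      (by positivity : (0:ℝ) ≤ σu / (σu + σv)) (by positivity : (0:ℝ) ≤ σv / (σu + σv))
      (by field_simp)
    simp only [smul_eq_mul] at h3
    rw [harg] at h3
    exact le_trans h2 h3
  refine Summable.of_nonneg_of_le
    (fun n => (hΦ n).nonneg' (div_nonneg (hrt n) (by positivity))) hkey ?_
  exact (hσus.mul_left _).add (hσvs.mul_left _)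

end Helpers

section OpHelpers

variable {Φ : ℕ → ℝ → ℝ} {a : ℕ → ℕ → ℝ}

lemma memL_op_neg (hΦ : IsMusielakOrlicz Φ) (s : SNumberSeq) (E F : Type)
    [NormedAddCommGroup E] [NormedSpace ℝ E] [CompleteSpace E]
    [NormedAddCommGroup F] [NormedSpace ℝ F] [CompleteSpace F]
    (T : E →L[ℝ] F) (h : OpMemL Φ a (s.s E F T)) : OpMemL Φ a (s.s E F (-T)) := by
  refine memL_mono hΦ (c := 1) one_pos.le (fun k => s.nonneg E F _ k)
    (fun k => s.nonneg E F _ k) ?_ h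
  intro k
  have hid : (((-(ContinuousLinearMap.id ℝ F)).comp T).comp
      (ContinuousLinearMap.id ℝ E)) = -T := by
    ext x; simp
  have h2 := s.ideal E F E F (-(ContinuousLinearMap.id ℝ F)) T
    (ContinuousLinearMap.id ℝ E) k
  rw [hid] at h2
  have hR : ‖-(ContinuousLinearMap.id ℝ F)‖ ≤ 1 := by
    rw [norm_neg]; exact ContinuousLinearMap.norm_id_le
  have hT : ‖(ContinuousLinearMap.id ℝ E)‖ ≤ 1 := ContinuousLinearMap.norm_id_le
  have hsn := s.nonneg E F T k
  have hRn := norm_nonneg (-(ContinuousLinearMap.id ℝ F))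
  have hTn := norm_nonneg (ContinuousLinearMap.id ℝ E)
  calc s.s E F (-T) k ≤ ‖-(ContinuousLinearMap.id ℝ F)‖ * s.s E F T k *
        ‖(ContinuousLinearMap.id ℝ E)‖ := h2
    _ ≤ 1 * s.s E F T k * 1 := by
        apply mul_le_mul (mul_le_mul hR le_rfl hsn one_pos.le) hT hTn
        nlinarith
    _ = 1 * s.s E F T k := by ring

lemma memL_op_add (hΦ : IsMusielakOrlicz Φ) {M : ℝ} (hM : 0 < M)
    (hD : CondDiamond a M) (s : SNumberSeq) (E F : Type)
    [NormedAddCommGroup E] [NormedSpace ℝ E] [CompleteSpace E]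
    [NormedAddCommGroup F] [NormedSpace ℝ F] [CompleteSpace F]
    (S T : E →L[ℝ] F) (hS : OpMemL Φ a (s.s E F S)) (hT : OpMemL Φ a (s.s E F T)) :
    OpMemL Φ a (s.s E F (S + T)) :=
  memL_add hΦ hM hD (fun k => s.nonneg E F _ k) (fun k => s.nonneg E F _ k)
    (fun k => s.nonneg E F _ k) (s.antitone E F T)
    (fun j k => s.additive E F S T j k) hS hT

lemma s_norm_lip (s : SNumberSeq) (E F : Type)
    [NormedAddCommGroup E] [NormedSpace ℝ E] [CompleteSpace E]
    [NormedAddCommGroup F] [NormedSpace ℝ F] [CompleteSpace F]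
    (X Y : E →L[ℝ] F) (k : ℕ) : s.s E F X k ≤ s.s E F Y k + ‖X - Y‖ := by
  have h := s.additive E F (X - Y) Y 0 k
  rw [sub_add_cancel, zero_add, s.norm_eq] at h
  linarith

lemma s_abs_sub_le (s : SNumberSeq) (E F : Type)
    [NormedAddCommGroup E] [NormedSpace ℝ E] [CompleteSpace E]
    [NormedAddCommGroup F] [NormedSpace ℝ F] [CompleteSpace F]
    (X Y : E →L[ℝ] F) (k : ℕ) : |s.s E F X k - s.s E F Y k| ≤ ‖X - Y‖ := by
  rw [abs_sub_le_iff]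
  constructor
  · have := s_norm_lip s E F X Y k; linarith
  · have := s_norm_lip s E F Y X k; rw [norm_sub_rev] at this; linarith

end OpHelpers

section NormHelpers

variable {Φ : ℕ → ℝ → ℝ} {a : ℕ → ℕ → ℝ}

lemma nset_smul_mem (hΦ : IsMusielakOrlicz Φ) {t u : ℕ → ℝ} {c σ : ℝ} (hc : 0 < c)
    (ht0 : ∀ k, 0 ≤ t k) (hu0 : ∀ k, 0 ≤ u k) (hle : ∀ k, t k ≤ c * u k)
    (hrows : ∀ n, Summable fun k => |a n k| * u k) (hσ : σ ∈ NSet Φ a u) :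
    c * σ ∈ NSet Φ a t := by
  obtain ⟨hσ0, hsumm, htsum⟩ := hσ
  have hterm : ∀ n k, |a n k| * t k ≤ c * (|a n k| * u k) := by
    intro n k
    have := mul_le_mul_of_nonneg_left (hle k) (abs_nonneg (a n k))
    nlinarith [abs_nonneg (a n k)]
  have hrows' : ∀ n, Summable fun k => |a n k| * t k := fun n =>
    Summable.of_nonneg_of_le (fun k => mul_nonneg (abs_nonneg _) (ht0 k))
      (hterm n) ((hrows n).mul_left c)
  have hrowle : ∀ n, (∑' k, |a n k| * t k) ≤ c * (∑' k, |a n k| * u k) := by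
    intro n
    have := Summable.tsum_le_tsum (hterm n) (hrows' n) ((hrows n).mul_left c)
    rwa [tsum_mul_left] at this
  have hrt : ∀ n, 0 ≤ (∑' k, |a n k| * t k) := row_nonneg a ht0
  have hkey : ∀ n, Φ n ((∑' k, |a n k| * t k) / (c * σ)) ≤
      Φ n ((∑' k, |a n k| * u k) / σ) := by
    intro n
    refine (hΦ n).mono' (div_nonneg (hrt n) (by positivity)) ?_
    rw [div_le_div_iff₀ (by positivity) hσ0]
    calc (∑' k, |a n k| * t k) * σ ≤ (c * (∑' k, |a n k| * u k)) * σ :=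
          mul_le_mul_of_nonneg_right (hrowle n) hσ0.le
      _ = (∑' k, |a n k| * u k) * (c * σ) := by ring
  have hs2 : Summable fun n => Φ n ((∑' k, |a n k| * t k) / (c * σ)) :=
    Summable.of_nonneg_of_le
      (fun n => (hΦ n).nonneg' (div_nonneg (hrt n) (by positivity))) hkey hsumm
  exact ⟨by positivity, hs2, (Summable.tsum_le_tsum hkey hs2 hsumm).trans htsum⟩

lemma opANorm_le_mul (hΦ : IsMusielakOrlicz Φ) {t u : ℕ → ℝ} {c : ℝ} (hc : 0 ≤ c)
    (ht0 : ∀ k, 0 ≤ t k) (hu0 : ∀ k, 0 ≤ u k) (hle : ∀ k, t k ≤ c * u k)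
    (hu : OpMemL Φ a u) : OpANorm Φ a t ≤ c * OpANorm Φ a u := by
  rcases eq_or_lt_of_le hc with hc0 | hc0
  · have ht : ∀ k, t k = 0 := by
      intro k
      have h1 := hle k
      rw [← hc0, zero_mul] at h1
      exact le_antisymm h1 (ht0 k)
    have hrow0 : ∀ n, (∑' k, |a n k| * t k) = 0 := by
      intro n; simp [ht]
    have hmem : ∀ σ : ℝ, 0 < σ → σ ∈ NSet Φ a t := by
      intro σ hσ
      have hφ : ∀ n, Φ n ((∑' k, |a n k| * t k) / σ) = 0 := by
        intro n; rw [hrow0 n, zero_div, (hΦ n).map_zero]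
      refine ⟨hσ, ?_, ?_⟩
      · exact (summable_congr hφ).mpr summable_zero
      · rw [tsum_congr hφ, tsum_zero]; exact zero_le_one
    have h0 : OpANorm Φ a t ≤ 0 := by
      refine le_of_forall_pos_le_add ?_
      intro ε hε
      rw [zero_add]
      exact opANorm_le_of_mem (hmem ε hε)
    rw [← hc0, zero_mul]
    exact h0
  · have hne := nset_nonempty hΦ hu0 hu
    have hlb : OpANorm Φ a t / c ≤ sInf (NSet Φ a u) := by
      refine le_csInf hne ?_
      intro σ hσ
      rw [div_le_iff₀ hc0]
      have := opANorm_le_of_mem (nset_smul_mem hΦ hc0 ht0 hu0 hle hu.1 hσ)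
      linarith [this]
    rw [opANorm_eq_sInf Φ a u] at *
    rw [div_le_iff₀ hc0] at hlb
    linarith
end NormHelpers

/-- for `A ∈ 𝒜` satisfying condition (♦) whose first column lies
in `l_Φ`, the class `L_Φ^A` is a quasi-Banach operator ideal. -/
theorem opLPhiA_operator_ideal
    (Φ : ℕ → ℝ → ℝ) (hΦ : IsMusielakOrlicz Φ)
    (a : ℕ → ℕ → ℝ) (hA : MatrixClassA a)
    (M : ℝ) (hM : 0 < M) (hD : CondDiamond a M)
    (hcol : ∃ σ > (0 : ℝ), Summable fun n => Φ n (|a n 0| / σ))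
    (s : SNumberSeq) :
    (∀ (E F : Type) [NormedAddCommGroup E] [NormedSpace ℝ E] [CompleteSpace E]
      [NormedAddCommGroup F] [NormedSpace ℝ F] [CompleteSpace F]
      (x' : E →L[ℝ] ℝ) (y : F),
      OpMemL Φ a (s.s E F (x'.smulRight y))) ∧
    (∀ (E F : Type) [NormedAddCommGroup E] [NormedSpace ℝ E] [CompleteSpace E]
      [NormedAddCommGroup F] [NormedSpace ℝ F] [CompleteSpace F]
      (S T : E →L[ℝ] F), OpMemL Φ a (s.s E F S) → OpMemL Φ a (s.s E F T) →
      OpMemL Φ a (s.s E F (S + T))) ∧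
    (∀ (E F E₀ F₀ : Type)
      [NormedAddCommGroup E] [NormedSpace ℝ E] [CompleteSpace E]
      [NormedAddCommGroup F] [NormedSpace ℝ F] [CompleteSpace F]
      [NormedAddCommGroup E₀] [NormedSpace ℝ E₀] [CompleteSpace E₀]
      [NormedAddCommGroup F₀] [NormedSpace ℝ F₀] [CompleteSpace F₀]
      (T : E₀ →L[ℝ] E) (S : E →L[ℝ] F) (R : F →L[ℝ] F₀),
      OpMemL Φ a (s.s E F S) →
      OpMemL Φ a (s.s E₀ F₀ ((R.comp S).comp T)) ∧
        OpANorm Φ a (s.s E₀ F₀ ((R.comp S).comp T)) ≤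
          ‖R‖ * OpANorm Φ a (s.s E F S) * ‖T‖) ∧
    (∀ (E F : Type) [NormedAddCommGroup E] [NormedSpace ℝ E] [CompleteSpace E]
      [NormedAddCommGroup F] [NormedSpace ℝ F] [CompleteSpace F]
      (f : ℕ → (E →L[ℝ] F)), (∀ m, OpMemL Φ a (s.s E F (f m))) →
      (∀ ε > (0 : ℝ), ∃ N : ℕ, ∀ m ≥ N, ∀ l ≥ N,
        OpANorm Φ a (s.s E F (f m - f l)) < ε) →
      ∃ T : E →L[ℝ] F, OpMemL Φ a (s.s E F T) ∧
        Tendsto (fun m => OpANorm Φ a (s.s E F (f m - T))) atTop (𝓝 0)) := by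
  obtain ⟨σ₀, hσ₀, hcolsum⟩ := hcol
  refine ⟨?_, ?_, ?_, ?_⟩
  · -- rank one operators
    intro E F _ _ _ _ _ _ x' y
    set T0 := x'.smulRight y with hT0
    have hrank : ∀ k : ℕ, 1 ≤ k → s.s E F T0 k = 0 := by
      intro k hk
      apply s.rank E F T0 k
      have hle : LinearMap.range (T0 : E →ₗ[ℝ] F) ≤ Submodule.span ℝ {y} := by
        rintro z ⟨x, rfl⟩
        have : (T0 : E →ₗ[ℝ] F) x = x' x • y := rfl
        rw [this]
        exact Submodule.smul_mem _ _ (Submodule.mem_span_singleton_self y)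
      calc Module.rank ℝ ↥(LinearMap.range (T0 : E →ₗ[ℝ] F)) ≤
            Module.rank ℝ ↥(Submodule.span ℝ ({y} : Set F)) := Submodule.rank_mono hle
        _ ≤ Cardinal.mk ({y} : Set F) := rank_span_le _
        _ = 1 := Cardinal.mk_singleton y
        _ ≤ (k : Cardinal) := by exact_mod_cast Nat.one_le_cast.mpr hk
    have hzero : ∀ k : ℕ, k ≠ 0 → s.s E F T0 k = 0 := fun k hk =>
      hrank k (Nat.one_le_iff_ne_zero.mpr hk)
    have hrows : ∀ n, Summable fun k => |a n k| * s.s E F T0 k := by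
      intro n
      refine summable_of_ne_finset_zero (s := {0}) ?_
      intro b hb
      rw [hzero b (by simpa using hb), mul_zero]
    have hrowval : ∀ n, (∑' k, |a n k| * s.s E F T0 k) = |a n 0| * s.s E F T0 0 := by
      intro n
      refine tsum_eq_single 0 ?_
      intro b hb
      rw [hzero b hb, mul_zero]
    refine ⟨hrows, σ₀ * (s.s E F T0 0 + 1), ?_, ?_⟩
    · have := s.nonneg E F T0 0; positivity
    · have hkey : ∀ n, Φ n ((∑' k, |a n k| * s.s E F T0 k) / (σ₀ * (s.s E F T0 0 + 1)))
          ≤ Φ n (|a n 0| / σ₀) := by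
        intro n
        rw [hrowval n]
        have hs0 := s.nonneg E F T0 0
        refine (hΦ n).mono' (by positivity) ?_
        rw [div_le_div_iff₀ (by positivity) hσ₀]
        nlinarith [abs_nonneg (a n 0), hσ₀.le, hs0]
      refine Summable.of_nonneg_of_le ?_ hkey hcolsum
      intro n
      have hs0 := s.nonneg E F T0 0
      refine (hΦ n).nonneg' ?_
      rw [hrowval n]
      positivity
  · -- additivity
    intro E F _ _ _ _ _ _ S T hS hT
    exact memL_op_add hΦ hM hD s E F S T hS hT
  · -- ideal property
    intro E F E₀ F₀ _ _ _ _ _ _ _ _ _ _ _ _ T S R hS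
    have hkey : ∀ k, s.s E₀ F₀ ((R.comp S).comp T) k ≤ (‖R‖ * ‖T‖) * s.s E F S k := by
      intro k
      have h1 := s.ideal E F E₀ F₀ R S T k
      calc s.s E₀ F₀ ((R.comp S).comp T) k ≤ ‖R‖ * s.s E F S k * ‖T‖ := h1
        _ = (‖R‖ * ‖T‖) * s.s E F S k := by ring
    have hc : (0:ℝ) ≤ ‖R‖ * ‖T‖ := by positivity
    refine ⟨memL_mono hΦ hc (fun k => s.nonneg _ _ _ k) (fun k => s.nonneg _ _ _ k)
      hkey hS, ?_⟩
    have := opANorm_le_mul (a := a) hΦ hc (fun k => s.nonneg _ _ _ k)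
      (fun k => s.nonneg _ _ _ k) hkey hS
    calc OpANorm Φ a (s.s E₀ F₀ ((R.comp S).comp T)) ≤
          (‖R‖ * ‖T‖) * OpANorm Φ a (s.s E F S) := this
      _ = ‖R‖ * OpANorm Φ a (s.s E F S) * ‖T‖ := by ring
  · -- completeness
    intro E F _ _ _ _ _ _ f hmem hcau
    have hdiff : ∀ m l : ℕ, OpMemL Φ a (s.s E F (f m - f l)) := by
      intro m l
      have h1 : f m - f l = f m + -(f l) := sub_eq_add_neg _ _
      rw [h1]
      exact memL_op_add hΦ hM hD s E F _ _ (hmem m) (memL_op_neg hΦ s E F _ (hmem l))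
    choose c hc0 hc1 using fun n => (hΦ n).exists_one_lt
    obtain ⟨n₀, hn₀⟩ := hA 0
    have hn₀' : (0:ℝ) < |a n₀ 0| := abs_pos.mpr hn₀
    have hnormb : ∀ (X : E →L[ℝ] F), OpMemL Φ a (s.s E F X) →
        ∀ σ ∈ NSet Φ a (s.s E F X), |a n₀ 0| * ‖X‖ ≤ c n₀ * σ := by
      intro X hX σ hσ
      obtain ⟨hσ0, hσs, hσt⟩ := hσ
      have hrow : |a n₀ 0| * ‖X‖ ≤ ∑' k, |a n₀ k| * s.s E F X k := by
        rw [← s.norm_eq E F X]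
        exact Summable.le_tsum (hX.1 n₀) 0 (fun j _ => mul_nonneg (abs_nonneg _) (s.nonneg E F X j))
      have h1 : Φ n₀ ((∑' k, |a n₀ k| * s.s E F X k) / σ) ≤ 1 := by
        refine le_trans (Summable.le_tsum hσs n₀ ?_) hσt
        intro j _
        exact (hΦ j).nonneg'
          (div_nonneg (row_nonneg a (fun k => s.nonneg E F X k) j) hσ0.le)
      have h2 : (∑' k, |a n₀ k| * s.s E F X k) / σ ≤ c n₀ :=
        (hΦ n₀).le_of_map_le_one (hc0 n₀) (hc1 n₀)
          (div_nonneg (row_nonneg a (fun k => s.nonneg E F X k) n₀) hσ0.le) h1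
      rw [div_le_iff₀ hσ0] at h2
      calc |a n₀ 0| * ‖X‖ ≤ ∑' k, |a n₀ k| * s.s E F X k := hrow
        _ ≤ c n₀ * σ := h2
    have hcauchy : CauchySeq f := by
      rw [Metric.cauchySeq_iff]
      intro ε hε
      have hε' : (0:ℝ) < ε * |a n₀ 0| / (2 * (c n₀ + 1)) := by
        have := hc0 n₀; positivity
      obtain ⟨N, hN⟩ := hcau _ hε'
      refine ⟨N, fun m hm l hl => ?_⟩
      have hlt := hN m hm l hl
      obtain ⟨σ, hσmem, hσlt⟩ := exists_lt_of_csInf_lt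
        (nset_nonempty hΦ (fun k => s.nonneg E F _ k) (hdiff m l)) hlt
      have hb := hnormb _ (hdiff m l) σ hσmem
      rw [dist_eq_norm]
      have hσ0 := hσmem.1
      have hcn := hc0 n₀
      have h2 : 2 * (c n₀ + 1) * (ε * |a n₀ 0| / (2 * (c n₀ + 1))) = ε * |a n₀ 0| := by
        field_simp
      nlinarith [norm_nonneg (f m - f l), mul_le_mul_of_nonneg_left hσlt.le hcn,
        mul_pos hε hn₀']
    obtain ⟨T, hT⟩ := cauchySeq_tendsto_of_complete hcauchy
    have hnormt : Tendsto (fun l => ‖f l - T‖) atTop (𝓝 0) :=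
      tendsto_iff_norm_sub_tendsto_zero.mp hT
    have hpt : ∀ (m k : ℕ), Tendsto (fun l => s.s E F (f m - f l) k) atTop
        (𝓝 (s.s E F (f m - T) k)) := by
      intro m k
      rw [tendsto_iff_dist_tendsto_zero]
      refine squeeze_zero (fun l => dist_nonneg) (fun l => ?_) hnormt
      rw [Real.dist_eq]
      have h1 := s_abs_sub_le s E F (f m - f l) (f m - T) k
      have he : (f m - f l) - (f m - T) = T - f l := by abel
      rw [he, norm_sub_rev] at h1
      exact h1
    have hkey : ∀ ε : ℝ, 0 < ε → ∃ N : ℕ, ∀ m ≥ N,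
        ε ∈ NSet Φ a (s.s E F (f m - T)) ∧ OpMemL Φ a (s.s E F (f m - T)) := by
      intro ε hε
      obtain ⟨N, hN⟩ := hcau ε hε
      refine ⟨N, fun m hm => ?_⟩
      set g : ℕ → ℝ := s.s E F (f m - T) with hg
      have hg0 : ∀ k, 0 ≤ g k := fun k => s.nonneg E F _ k
      have hσex : ∀ l, N ≤ l → ∃ σ ∈ NSet Φ a (s.s E F (f m - f l)), σ < ε := fun l hl =>
        exists_lt_of_csInf_lt
          (nset_nonempty hΦ (fun k => s.nonneg E F _ k) (hdiff m l)) (hN m hm l hl)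
      have stage1 : ∀ (G : Finset ℕ) (Fn : ℕ → Finset ℕ),
          (∑ n ∈ G, Φ n ((∑ k ∈ Fn n, |a n k| * g k) / ε)) ≤ 1 := by
        intro G Fn
        have hlim : Tendsto (fun l => ∑ n ∈ G, Φ n ((∑ k ∈ Fn n,
            |a n k| * s.s E F (f m - f l) k) / ε)) atTop
            (𝓝 (∑ n ∈ G, Φ n ((∑ k ∈ Fn n, |a n k| * g k) / ε))) := by
          refine tendsto_finset_sum G (fun n _ => ?_)
          refine (hΦ n).tendsto_comp
            (fun l => div_nonneg (Finset.sum_nonneg fun k _ =>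
              mul_nonneg (abs_nonneg _) (s.nonneg E F _ k)) hε.le)
            (div_nonneg (Finset.sum_nonneg fun k _ =>
              mul_nonneg (abs_nonneg _) (hg0 k)) hε.le) ?_
          exact (tendsto_finset_sum (Fn n)
            (fun k _ => (hpt m k).const_mul (|a n k|))).div_const ε
        refine le_of_tendsto hlim ?_
        filter_upwards [eventually_ge_atTop N] with l hl
        obtain ⟨σ, hσmem, hσlt⟩ := hσex l hl
        obtain ⟨hσ0, hσs, hσt⟩ := hσmem
        have hterm : ∀ n ∈ G, Φ n ((∑ k ∈ Fn n, |a n k| * s.s E F (f m - f l) k) / ε)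
            ≤ Φ n ((∑' k, |a n k| * s.s E F (f m - f l) k) / σ) := by
          intro n _
          refine (hΦ n).mono' (div_nonneg (Finset.sum_nonneg fun k _ =>
            mul_nonneg (abs_nonneg _) (s.nonneg E F _ k)) hε.le) ?_
          refine div_le_div₀ (row_nonneg a (fun k => s.nonneg E F _ k) n)
            (Summable.sum_le_tsum (Fn n) (fun k _ => mul_nonneg (abs_nonneg _) (s.nonneg E F _ k))
              ((hdiff m l).1 n)) hσ0 hσlt.le
        calc (∑ n ∈ G, Φ n ((∑ k ∈ Fn n, |a n k| * s.s E F (f m - f l) k) / ε))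
            ≤ ∑ n ∈ G, Φ n ((∑' k, |a n k| * s.s E F (f m - f l) k) / σ) :=
              Finset.sum_le_sum hterm
          _ ≤ ∑' n, Φ n ((∑' k, |a n k| * s.s E F (f m - f l) k) / σ) :=
              Summable.sum_le_tsum G (fun n _ => (hΦ n).nonneg' (div_nonneg
                (row_nonneg a (fun k => s.nonneg E F _ k) n) hσ0.le)) hσs
          _ ≤ 1 := hσt
      have stage2 : ∀ n, Summable (fun k => |a n k| * g k) ∧
          (∑' k, |a n k| * g k) ≤ c n * ε := by
        intro n
        have hb : ∀ F0 : Finset ℕ, (∑ k ∈ F0, |a n k| * g k) ≤ c n * ε := by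
          intro F0
          have h1 := stage1 {n} (fun _ => F0)
          rw [Finset.sum_singleton] at h1
          have h2 : (∑ k ∈ F0, |a n k| * g k) / ε ≤ c n :=
            (hΦ n).le_of_map_le_one (hc0 n) (hc1 n)
              (div_nonneg (Finset.sum_nonneg fun k _ =>
                mul_nonneg (abs_nonneg _) (hg0 k)) hε.le) h1
          rw [div_le_iff₀ hε] at h2
          linarith
        have hsumg : Summable (fun k => |a n k| * g k) :=
          summable_of_sum_le (fun k => mul_nonneg (abs_nonneg _) (hg0 k)) hb
        exact ⟨hsumg, Summable.tsum_le_of_sum_le hsumg hb⟩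
      have stage3 : ∀ G : Finset ℕ, (∑ n ∈ G, Φ n ((∑' k, |a n k| * g k) / ε)) ≤ 1 := by
        intro G
        have hlim : Tendsto (fun F0 : Finset ℕ =>
            ∑ n ∈ G, Φ n ((∑ k ∈ F0, |a n k| * g k) / ε)) atTop
            (𝓝 (∑ n ∈ G, Φ n ((∑' k, |a n k| * g k) / ε))) := by
          refine tendsto_finset_sum G (fun n _ => ?_)
          have h1 : Tendsto (fun F0 : Finset ℕ => ∑ k ∈ F0, |a n k| * g k) atTop
              (𝓝 (∑' k, |a n k| * g k)) := (stage2 n).1.hasSum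
          exact (hΦ n).tendsto_comp
            (fun F0 => div_nonneg (Finset.sum_nonneg fun k _ =>
              mul_nonneg (abs_nonneg _) (hg0 k)) hε.le)
            (div_nonneg (row_nonneg a hg0 n) hε.le) (h1.div_const ε)
        exact le_of_tendsto hlim
          (Filter.Eventually.of_forall (fun F0 => stage1 G (fun _ => F0)))
      have hφnn : ∀ n, 0 ≤ Φ n ((∑' k, |a n k| * g k) / ε) := fun n =>
        (hΦ n).nonneg' (div_nonneg (row_nonneg a hg0 n) hε.le)
      have stage4 : Summable (fun n => Φ n ((∑' k, |a n k| * g k) / ε)) :=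
        summable_of_sum_le hφnn stage3
      have stage5 : (∑' n, Φ n ((∑' k, |a n k| * g k) / ε)) ≤ 1 :=
        Summable.tsum_le_of_sum_le stage4 stage3
      exact ⟨⟨hε, stage4, stage5⟩, ⟨fun n => (stage2 n).1, ε, hε, stage4⟩⟩
    obtain ⟨N₁, hN₁⟩ := hkey 1 one_pos
    have hTmem : OpMemL Φ a (s.s E F T) := by
      have h1 := (hN₁ N₁ le_rfl).2
      have h2 : OpMemL Φ a (s.s E F (-(f N₁ - T))) := memL_op_neg hΦ s E F _ h1
      have h3 : T = f N₁ + -(f N₁ - T) := by abel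
      rw [h3]
      exact memL_op_add hΦ hM hD s E F _ _ (hmem N₁) h2
    refine ⟨T, hTmem, ?_⟩
    rw [Metric.tendsto_atTop]
    intro ε hε
    obtain ⟨N, hN⟩ := hkey (ε / 2) (by linarith)
    refine ⟨N, fun m hm => ?_⟩
    have h1 := opANorm_le_of_mem (hN m hm).1
    have h2 := opANorm_nonneg Φ a (s.s E F (f m - T))
    rw [Real.dist_eq, sub_zero, abs_of_nonneg h2]
    linarith
end

section
/- Let A ∈ 𝒜 satisfy condition (♦), and fix an s-number sequence s and Banach spaces E, F. Then H_Φ^A(E,F) is a closed linear subspace of (L_Φ^A(E,F), ‖·‖_Φ^A). -/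
open Filter Topology

section Aux

lemma orlicz_mono {φ : ℝ → ℝ} (hφ : IsOrliczFn φ) {x y : ℝ} (hx : 0 ≤ x) (hxy : x ≤ y) :
    φ x ≤ φ y := hφ.monotoneOn hx (le_trans hx hxy) hxy

lemma orlicz_nonneg {φ : ℝ → ℝ} (hφ : IsOrliczFn φ) {x : ℝ} (hx : 0 ≤ x) : 0 ≤ φ x := by
  have := orlicz_mono hφ le_rfl hx
  rwa [hφ.map_zero] at this

lemma orlicz_half {φ : ℝ → ℝ} (hφ : IsOrliczFn φ) {u v : ℝ} (hu : 0 ≤ u) (hv : 0 ≤ v) :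
    φ (u + v) ≤ φ (2 * u) / 2 + φ (2 * v) / 2 := by
  have h := hφ.convexOn.2 (x := 2 * u) (y := 2 * v) (by simp [hu] : (2:ℝ)*u ∈ Set.Ici (0:ℝ))
    (by simp [hv] : (2:ℝ)*v ∈ Set.Ici (0:ℝ)) (by norm_num : (0:ℝ) ≤ 1/2)
    (by norm_num : (0:ℝ) ≤ 1/2) (by norm_num)
  simp only [smul_eq_mul] at h
  have e : (1/2 : ℝ) * (2*u) + (1/2 : ℝ) * (2*v) = u + v := by ring
  rw [e] at h
  linarith

set_option maxHeartbeats 1000000 in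
lemma snum_smul {E F : Type} [NormedAddCommGroup E] [NormedSpace ℝ E] [CompleteSpace E]
    [NormedAddCommGroup F] [NormedSpace ℝ F] [CompleteSpace F]
    (s : SNumberSeq) (α : ℝ) (T : E →L[ℝ] F) (k : ℕ) :
    s.s E F (α • T) k ≤ |α| * s.s E F T k := by
  have h := s.ideal E F E F (α • ContinuousLinearMap.id ℝ F) T (ContinuousLinearMap.id ℝ E) k
  have e : ((α • ContinuousLinearMap.id ℝ F).comp T).comp (ContinuousLinearMap.id ℝ E)
      = α • T := by
    ext x; simp
  rw [e] at h
  have h1 : ‖α • ContinuousLinearMap.id ℝ F‖ ≤ |α| := by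
    calc ‖α • ContinuousLinearMap.id ℝ F‖ ≤ ‖α‖ * ‖ContinuousLinearMap.id ℝ F‖ :=
          ContinuousLinearMap.opNorm_smul_le _ _
      _ ≤ |α| * 1 := by
          rw [Real.norm_eq_abs]
          exact mul_le_mul_of_nonneg_left ContinuousLinearMap.norm_id_le (abs_nonneg α)
      _ = |α| := mul_one _
  have h2 : ‖ContinuousLinearMap.id ℝ E‖ ≤ 1 := ContinuousLinearMap.norm_id_le
  have hs := s.nonneg E F T k
  calc s.s E F (α • T) k ≤ ‖α • ContinuousLinearMap.id ℝ F‖ * s.s E F T k *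
        ‖ContinuousLinearMap.id ℝ E‖ := h
    _ ≤ |α| * s.s E F T k * 1 := by
        apply mul_le_mul (mul_le_mul_of_nonneg_right h1 hs) h2 (norm_nonneg _)
        positivity
    _ = |α| * s.s E F T k := mul_one _

lemma snum_neg {E F : Type} [NormedAddCommGroup E] [NormedSpace ℝ E] [CompleteSpace E]
    [NormedAddCommGroup F] [NormedSpace ℝ F] [CompleteSpace F]
    (s : SNumberSeq) (T : E →L[ℝ] F) (k : ℕ) :
    s.s E F (-T) k = s.s E F T k := by
  have h1 := snum_smul s (-1 : ℝ) T k
  have h2 := snum_smul s (-1 : ℝ) (-T) k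
  simp only [neg_one_smul, neg_neg, abs_neg, abs_one, one_mul] at h1 h2
  exact le_antisymm h1 h2

/-- Key splitting lemma using condition (♦). -/
lemma row_split (a : ℕ → ℕ → ℝ) {M : ℝ} (hM : 0 < M) (hD : CondDiamond a M)
    {t u v : ℕ → ℝ} (ht0 : ∀ k, 0 ≤ t k) (hta : Antitone t)
    (htuv : ∀ k, t (2 * k) ≤ u k + v k)
    (n : ℕ)
    (hsu : Summable fun k => |a n k| * u k) (hsv : Summable fun k => |a n k| * v k) :
    (Summable fun k => |a n k| * t k) ∧
      (∑' k, |a n k| * t k) ≤ M * ((∑' k, |a n k| * u k) + ∑' k, |a n k| * v k) := by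
  set f : ℕ → ℝ := fun k => |a n k| * t k with hf
  set g : ℕ → ℝ := fun k => M * (|a n k| * u k + |a n k| * v k) with hg
  have hg_sum : Summable g := (hsu.add hsv).mul_left M
  have hfg : ∀ k, f (2 * k) + f (2 * k + 1) ≤ g k := by
    intro k
    have h1 : t (2 * k + 1) ≤ t (2 * k) := hta (Nat.le_succ _)
    have h2 : |a n (2*k)| * t (2*k) + |a n (2*k+1)| * t (2*k+1)
        ≤ (|a n (2*k)| + |a n (2*k+1)|) * t (2*k) := by
      have := mul_le_mul_of_nonneg_left h1 (abs_nonneg (a n (2*k+1)))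
      nlinarith [abs_nonneg (a n (2*k))]
    have h3 : (|a n (2*k)| + |a n (2*k+1)|) * t (2*k) ≤ (M * |a n k|) * t (2*k) :=
      mul_le_mul_of_nonneg_right (hD n k) (ht0 _)
    have h4 : (M * |a n k|) * t (2*k) ≤ (M * |a n k|) * (u k + v k) :=
      mul_le_mul_of_nonneg_left (htuv k) (by positivity)
    calc f (2*k) + f (2*k+1) ≤ (|a n (2*k)| + |a n (2*k+1)|) * t (2*k) := h2
      _ ≤ (M * |a n k|) * (u k + v k) := le_trans h3 h4
      _ = g k := by simp only [hg]; ring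
  have hf0 : ∀ k, 0 ≤ f k := fun k => mul_nonneg (abs_nonneg _) (ht0 k)
  have he : Summable fun k => f (2 * k) :=
    Summable.of_nonneg_of_le (fun k => hf0 _) (fun k => by
      have := hfg k; have := hf0 (2*k+1); linarith) hg_sum
  have ho : Summable fun k => f (2 * k + 1) :=
    Summable.of_nonneg_of_le (fun k => hf0 _) (fun k => by
      have := hfg k; have := hf0 (2*k); linarith) hg_sum
  have hsum : Summable f := Summable.even_add_odd he ho
  refine ⟨hsum, ?_⟩
  have h5 : (∑' k, f k) = (∑' k, f (2*k)) + ∑' k, f (2*k+1) := (tsum_even_add_odd he ho).symm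
  have h6 : (∑' k, f (2*k)) + ∑' k, f (2*k+1) = ∑' k, (f (2*k) + f (2*k+1)) :=
    (Summable.tsum_add he ho).symm
  have h7 : (∑' k, (f (2*k) + f (2*k+1))) ≤ ∑' k, g k :=
    Summable.tsum_le_tsum hfg (he.add ho) hg_sum
  have h8 : (∑' k, g k) = M * ((∑' k, |a n k| * u k) + ∑' k, |a n k| * v k) := by
    rw [hg, tsum_mul_left, Summable.tsum_add hsu hsv]
  calc (∑' k, f k) = ∑' k, (f (2*k) + f (2*k+1)) := by rw [h5, h6]
    _ ≤ ∑' k, g k := h7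
    _ = _ := h8

/-- If the Musielak-Orlicz sums are finite for one `σ₁`, then for some `σ`
the sum is at most `1`. -/
lemma exists_sum_le_one {Φ : ℕ → ℝ → ℝ} (hΦ : IsMusielakOrlicz Φ) {r : ℕ → ℝ}
    (hr : ∀ n, 0 ≤ r n) {σ₁ : ℝ} (hσ₁ : 0 < σ₁)
    (hs : Summable fun n => Φ n (r n / σ₁)) :
    ∃ σ : ℝ, 0 < σ ∧ (Summable fun n => Φ n (r n / σ)) ∧ (∑' n, Φ n (r n / σ)) ≤ 1 := by
  have hmax : ∀ σ : ℝ, 0 < max σ σ₁ := fun σ => lt_of_lt_of_le hσ₁ (le_max_right σ σ₁)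
  have hptle : ∀ (σ : ℝ) (n : ℕ), Φ n (r n / max σ σ₁) ≤ Φ n (r n / σ₁) := by
    intro σ n
    refine orlicz_mono (hΦ n) (div_nonneg (hr n) (hmax σ).le) ?_
    gcongr
    · exact hr n
    · exact le_max_right σ σ₁
  have hpt0 : ∀ (σ : ℝ) (n : ℕ), 0 ≤ Φ n (r n / max σ σ₁) := fun σ n =>
    orlicz_nonneg (hΦ n) (div_nonneg (hr n) (hmax σ).le)
  have hlim : ∀ n : ℕ, Tendsto (fun σ : ℝ => Φ n (r n / max σ σ₁)) atTop (𝓝 0) := by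
    intro n
    have hm : Tendsto (fun σ : ℝ => max σ σ₁) atTop atTop :=
      tendsto_atTop_mono (fun σ => le_max_left σ σ₁) tendsto_id
    have h0 : Tendsto (fun x : ℝ => r n / x) atTop (𝓝 0) := by
      simpa [div_eq_mul_inv] using tendsto_inv_atTop_zero.const_mul (r n)
    have h1 : Tendsto (fun σ : ℝ => r n / max σ σ₁) atTop (𝓝 0) := h0.comp hm
    have h2 : Tendsto (fun σ : ℝ => r n / max σ σ₁) atTop (𝓝[Set.Ici (0:ℝ)] 0) :=
      tendsto_nhdsWithin_of_tendsto_nhds_of_eventually_within _ h1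
        (Eventually.of_forall fun σ => div_nonneg (hr n) (hmax σ).le)
    have h3 : ContinuousWithinAt (Φ n) (Set.Ici (0:ℝ)) 0 :=
      (hΦ n).continuousOn 0 (by simp)
    have h4 := h3.tendsto.comp h2
    rwa [(hΦ n).map_zero, Function.comp_def] at h4
  have hT : Tendsto (fun σ : ℝ => ∑' n, Φ n (r n / max σ σ₁)) atTop (𝓝 (∑' _ : ℕ, (0:ℝ))) :=
    tendsto_tsum_of_dominated_convergence hs hlim
      (Eventually.of_forall fun σ n => by
        rw [Real.norm_eq_abs, abs_of_nonneg (hpt0 σ n)]; exact hptle σ n)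
  rw [tsum_zero] at hT
  have hev : ∀ᶠ σ : ℝ in atTop, (∑' n, Φ n (r n / max σ σ₁)) < 1 :=
    hT.eventually_lt_const (by norm_num)
  obtain ⟨σ, hσ⟩ := hev.exists
  exact ⟨max σ σ₁, hmax σ,
    Summable.of_nonneg_of_le (hpt0 σ) (hptle σ) hs, hσ.le⟩

end Aux

/-- for `A ∈ 𝒜` satisfying condition (♦), `H_Φ^A(E,F)` is a
closed linear subspace of `(L_Φ^A(E,F), ‖·‖_Φ^A)`. -/
theorem opHPhiA_closed_subspace
    (Φ : ℕ → ℝ → ℝ) (hΦ : IsMusielakOrlicz Φ)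
    (a : ℕ → ℕ → ℝ) (hA : MatrixClassA a)
    (M : ℝ) (hM : 0 < M) (hD : CondDiamond a M)
    (s : SNumberSeq)
    (E F : Type) [NormedAddCommGroup E] [NormedSpace ℝ E] [CompleteSpace E]
    [NormedAddCommGroup F] [NormedSpace ℝ F] [CompleteSpace F] :
    (∀ T : E →L[ℝ] F, OpMemH Φ a (s.s E F T) → OpMemL Φ a (s.s E F T)) ∧
    (∀ S T : E →L[ℝ] F, OpMemH Φ a (s.s E F S) → OpMemH Φ a (s.s E F T) →
      OpMemH Φ a (s.s E F (S + T))) ∧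
    (∀ (α : ℝ) (T : E →L[ℝ] F), OpMemH Φ a (s.s E F T) →
      OpMemH Φ a (s.s E F (α • T))) ∧
    (∀ T : E →L[ℝ] F, OpMemL Φ a (s.s E F T) →
      (∀ ε > (0 : ℝ), ∃ S : E →L[ℝ] F, OpMemH Φ a (s.s E F S) ∧
        OpANorm Φ a (s.s E F (T - S)) < ε) →
      OpMemH Φ a (s.s E F T)) := by
  classical
  set t : (E →L[ℝ] F) → ℕ → ℝ := fun T => s.s E F T with ht
  have hnn : ∀ (T : E →L[ℝ] F) (k : ℕ), 0 ≤ t T k := fun T k => s.nonneg E F T k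
  have hanti : ∀ T : E →L[ℝ] F, Antitone (t T) := fun T => s.antitone E F T
  have hrow0 : ∀ (T : E →L[ℝ] F) (n : ℕ), 0 ≤ ∑' k, |a n k| * t T k := fun T n =>
    tsum_nonneg fun k => mul_nonneg (abs_nonneg _) (hnn T k)
  have hphinn : ∀ (n : ℕ) (x : ℝ), 0 ≤ x → 0 ≤ Φ n x := fun n x hx => orlicz_nonneg (hΦ n) hx
  -- the convexity estimate for rows
  have hconv : ∀ (R S T : E →L[ℝ] F), (∀ k, t R (2*k) ≤ t S k + t T k) →
      (∀ n, Summable fun k => |a n k| * t S k) → (∀ n, Summable fun k => |a n k| * t T k) →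
      (∀ n, Summable fun k => |a n k| * t R k) ∧
      ∀ σ : ℝ, 0 < σ → ∀ n : ℕ, Φ n ((∑' k, |a n k| * t R k) / σ) ≤
        Φ n ((∑' k, |a n k| * t S k) / (σ / (2*M))) / 2 +
        Φ n ((∑' k, |a n k| * t T k) / (σ / (2*M))) / 2 := by
    intro R S T hRST hS hT
    have key : ∀ n, (Summable fun k => |a n k| * t R k) ∧
        (∑' k, |a n k| * t R k) ≤ M * ((∑' k, |a n k| * t S k) + ∑' k, |a n k| * t T k) :=
      fun n => row_split a hM hD (hnn R) (hanti R) hRST n (hS n) (hT n)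
    refine ⟨fun n => (key n).1, fun σ hσ n => ?_⟩
    have h1 : (∑' k, |a n k| * t R k) / σ ≤
        (M * (∑' k, |a n k| * t S k)) / σ + (M * (∑' k, |a n k| * t T k)) / σ := by
      rw [← add_div]
      gcongr
      calc (∑' k, |a n k| * t R k)
          ≤ M * ((∑' k, |a n k| * t S k) + ∑' k, |a n k| * t T k) := (key n).2
        _ = M * (∑' k, |a n k| * t S k) + M * (∑' k, |a n k| * t T k) := by ring
    have h2 := orlicz_mono (hΦ n) (div_nonneg (hrow0 R n) hσ.le) h1
    have h3 := orlicz_half (hΦ n)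
      (u := (M * (∑' k, |a n k| * t S k)) / σ) (v := (M * (∑' k, |a n k| * t T k)) / σ)
      (div_nonneg (mul_nonneg hM.le (hrow0 S n)) hσ.le)
      (div_nonneg (mul_nonneg hM.le (hrow0 T n)) hσ.le)
    have e1 : 2 * ((M * (∑' k, |a n k| * t S k)) / σ) =
        (∑' k, |a n k| * t S k) / (σ / (2*M)) := by
      rw [div_div_eq_mul_div]; ring
    have e2 : 2 * ((M * (∑' k, |a n k| * t T k)) / σ) =
        (∑' k, |a n k| * t T k) / (σ / (2*M)) := by
      rw [div_div_eq_mul_div]; ring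
    rw [e1, e2] at h3
    exact le_trans h2 h3
  refine ⟨?_, ?_, ?_, ?_⟩
  · -- H ⊆ L
    rintro T ⟨h1, h2⟩
    exact ⟨h1, 1, one_pos, h2 1 one_pos⟩
  · -- addition
    rintro S T ⟨hS1, hS2⟩ ⟨hT1, hT2⟩
    have hadd2 : ∀ k : ℕ, t (S + T) (2 * k) ≤ t S k + t T k := by
      intro k
      have h := s.additive E F S T k k
      rw [← two_mul] at h
      exact h
    obtain ⟨hsum, hest⟩ := hconv (S + T) S T hadd2 hS1 hT1
    refine ⟨hsum, fun σ hσ => ?_⟩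
    have hσ' : 0 < σ / (2*M) := by positivity
    exact Summable.of_nonneg_of_le
      (fun n => hphinn n _ (div_nonneg (hrow0 _ n) hσ.le)) (hest σ hσ)
      (((hS2 _ hσ').div_const 2).add ((hT2 _ hσ').div_const 2))
  · -- scalar multiplication
    rintro α T ⟨hT1, hT2⟩
    have hsm : ∀ k, t (α • T) k ≤ |α| * t T k := snum_smul s α T
    have hle : ∀ n k, |a n k| * t (α • T) k ≤ |α| * (|a n k| * t T k) := by
      intro n k
      calc |a n k| * t (α • T) k ≤ |a n k| * (|α| * t T k) :=
            mul_le_mul_of_nonneg_left (hsm k) (abs_nonneg _)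
        _ = |α| * (|a n k| * t T k) := by ring
    have hsum : ∀ n, Summable fun k => |a n k| * t (α • T) k := fun n =>
      Summable.of_nonneg_of_le (fun k => mul_nonneg (abs_nonneg _) (hnn _ k))
        (hle n) ((hT1 n).mul_left |α|)
    refine ⟨hsum, fun σ hσ => ?_⟩
    have hα1 : (0:ℝ) < |α| + 1 := by positivity
    have hσ' : 0 < σ / (|α| + 1) := by positivity
    have hrowle : ∀ n, (∑' k, |a n k| * t (α • T) k) / σ ≤
        (∑' k, |a n k| * t T k) / (σ / (|α| + 1)) := by
      intro n
      have h1 : (∑' k, |a n k| * t (α • T) k) ≤ |α| * ∑' k, |a n k| * t T k := by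
        rw [← tsum_mul_left]
        exact Summable.tsum_le_tsum (hle n) (hsum n) ((hT1 n).mul_left |α|)
      have h2 : |α| * (∑' k, |a n k| * t T k) ≤ (|α| + 1) * ∑' k, |a n k| * t T k := by
        have := hrow0 T n; nlinarith
      have e : (∑' k, |a n k| * t T k) / (σ / (|α| + 1)) =
          ((|α| + 1) * ∑' k, |a n k| * t T k) / σ := by
        rw [div_div_eq_mul_div]; ring
      rw [e]
      gcongr
      exact le_trans h1 h2
    exact Summable.of_nonneg_of_le
      (fun n => hphinn n _ (div_nonneg (hrow0 _ n) hσ.le))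
      (fun n => orlicz_mono (hΦ n) (div_nonneg (hrow0 _ n) hσ.le) (hrowle n))
      (hT2 _ hσ')
  · -- closedness
    rintro T ⟨hT1, σ₀, hσ₀, hσ₀sum⟩ happrox
    refine ⟨hT1, fun σ hσ => ?_⟩
    obtain ⟨S, ⟨hS1, hS2⟩, hSnorm⟩ := happrox (σ/(2*M)) (by positivity)
    have hD2 : ∀ k, t (T - S) (2*k) ≤ t T k + t S k := by
      intro k
      have h := s.additive E F T (-S) k k
      rw [← two_mul] at h
      calc t (T - S) (2*k) = s.s E F (T + (-S)) (2*k) := by rw [sub_eq_add_neg]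
        _ ≤ s.s E F T k + s.s E F (-S) k := h
        _ = t T k + t S k := by rw [snum_neg]
    have hDsum : ∀ n, Summable fun k => |a n k| * t (T - S) k := fun n =>
      (row_split a hM hD (hnn (T - S)) (hanti (T - S)) hD2 n (hT1 n) (hS1 n)).1
    have hT2k : ∀ k, t T (2*k) ≤ t S k + t (T - S) k := by
      intro k
      have h := s.additive E F S (T - S) k k
      rw [← two_mul, add_sub_cancel] at h
      exact h
    obtain ⟨_, hTest⟩ := hconv T S (T - S) hT2k hS1 hDsum
    obtain ⟨_, hDest⟩ := hconv (T - S) T S hD2 hT1 hS1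
    -- the φ-sums for T - S converge at σ₁ = 2*M*σ₀
    have hσ₁ : (0:ℝ) < 2*M*σ₀ := by positivity
    have e0 : (2*M*σ₀)/(2*M) = σ₀ := by
      field_simp
    have hDphi : Summable fun n => Φ n ((∑' k, |a n k| * t (T - S) k) / (2*M*σ₀)) := by
      refine Summable.of_nonneg_of_le
        (fun n => hphinn n _ (div_nonneg (hrow0 _ n) hσ₁.le))
        (hDest (2*M*σ₀) hσ₁) ?_
      simp only [e0]
      exact (hσ₀sum.div_const 2).add ((hS2 σ₀ hσ₀).div_const 2)
    obtain ⟨σ₂, hσ₂pos, hσ₂sum, hσ₂le⟩ :=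
      exists_sum_le_one hΦ (fun n => hrow0 (T - S) n) hσ₁ hDphi
    -- extract ρ from the norm bound
    have hne : Set.Nonempty {ρ : ℝ | 0 < ρ ∧
        (Summable fun n => Φ n ((∑' k, |a n k| * t (T - S) k) / ρ)) ∧
        (∑' n, Φ n ((∑' k, |a n k| * t (T - S) k) / ρ)) ≤ 1} :=
      ⟨σ₂, hσ₂pos, hσ₂sum, hσ₂le⟩
    have hbb : BddBelow {ρ : ℝ | 0 < ρ ∧
        (Summable fun n => Φ n ((∑' k, |a n k| * t (T - S) k) / ρ)) ∧
        (∑' n, Φ n ((∑' k, |a n k| * t (T - S) k) / ρ)) ≤ 1} :=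
      ⟨0, fun x hx => hx.1.le⟩
    have hSnorm' : sInf {ρ : ℝ | 0 < ρ ∧
        (Summable fun n => Φ n ((∑' k, |a n k| * t (T - S) k) / ρ)) ∧
        (∑' n, Φ n ((∑' k, |a n k| * t (T - S) k) / ρ)) ≤ 1} < σ/(2*M) := hSnorm
    obtain ⟨ρ, hρmem, hρlt⟩ := (csInf_lt_iff hbb hne).mp hSnorm'
    obtain ⟨hρpos, hρsum, -⟩ := hρmem
    have hσ2M : 0 < σ/(2*M) := by positivity
    refine Summable.of_nonneg_of_le
      (fun n => hphinn n _ (div_nonneg (hrow0 T n) hσ.le))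
      (fun n => le_trans (hTest σ hσ n) ?_)
      (((hS2 _ hσ2M).div_const 2).add (hρsum.div_const 2))
    have hmono : Φ n ((∑' k, |a n k| * t (T - S) k) / (σ/(2*M))) ≤
        Φ n ((∑' k, |a n k| * t (T - S) k) / ρ) := by
      refine orlicz_mono (hΦ n) (div_nonneg (hrow0 _ n) hσ2M.le) ?_
      have h0 := hrow0 (T - S) n
      gcongr
    linarith
end
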